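/- Every circuit-reversal equivalence class of orientations of M contains exactly one σ-compatible orientation. -/

import Mathlib

open Matrix

/-- A vector with all entries in `{-1,0,1}`. -/
def SignVec {m : ℕ} (C : Fin m → ℤ) : Prop := ∀ e, C e = -1 ∨ C e = 0 ∨ C e = 1

/-- A signed circuit of `A`. -/
def IsCircuit {r m : ℕ} (A : Matrix (Fin r) (Fin m) ℤ) (C : Fin m → ℤ) : Prop :=
  SignVec C ∧ C ≠ 0 ∧ A.mulVec C = 0 ∧
    ∀ v : Fin m → ℤ, v ≠ 0 → A.mulVec v = 0 →
      {e | v e ≠ 0} ⊆ {e | C e ≠ 0} → {e | v e ≠ 0} = {e | C e ≠ 0}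

/-- An orientation of the matroid: a function `E → {-1,1}`. -/
def IsOrientation {m : ℕ} (O : Fin m → ℤ) : Prop := ∀ e, O e = 1 ∨ O e = -1

/-- One circuit reversal. -/
def CircuitReversal {r m : ℕ} (A : Matrix (Fin r) (Fin m) ℤ) (O O' : Fin m → ℤ) : Prop :=
  ∃ C : Fin m → ℤ, IsCircuit A C ∧ (∀ e, C e ≠ 0 → O e = C e) ∧
    (∀ e, C e ≠ 0 → O' e = -O e) ∧ (∀ e, C e = 0 → O' e = O e)

/-- Circuit-reversal equivalence. -/
def CircEquiv {r m : ℕ} (A : Matrix (Fin r) (Fin m) ℤ) : (Fin m → ℤ) → (Fin m → ℤ) → Prop :=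
  Relation.EqvGen (CircuitReversal A)

/-- `O` is σ-compatible (for the acyclic signature induced by `w`): every signed circuit
compatible with `O` has positive inner product with `w`. -/
def SigmaCompatible {r m : ℕ} (A : Matrix (Fin r) (Fin m) ℤ) (w : Fin m → ℝ)
    (O : Fin m → ℤ) : Prop :=
  ∀ C : Fin m → ℤ, IsCircuit A C → (∀ e, C e ≠ 0 → O e = C e) →
    0 < ∑ e, w e * (C e : ℝ)

lemma tu_cast {r m : ℕ} {A : Matrix (Fin r) (Fin m) ℤ} (hTU : A.IsTotallyUnimodular) :
    (A.map ((↑) : ℤ → ℚ)).IsTotallyUnimodular := by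
  rw [Matrix.isTotallyUnimodular_iff]
  intro k f g
  obtain ⟨s, hs⟩ := (Matrix.isTotallyUnimodular_iff A).mp hTU k f g
  refine ⟨s, ?_⟩
  have h2 : ((A.map ((↑) : ℤ → ℚ)).submatrix f g) = (A.submatrix f g).map ⇑(Int.castRingHom ℚ) := rfl
  rw [h2, ← RingHom.mapMatrix_apply, ← RingHom.map_det, ← hs]
  cases s <;> simp

lemma mulVec_cast {r m : ℕ} (A : Matrix (Fin r) (Fin m) ℤ) (v : Fin m → ℤ) (i : Fin r) :
    (A.map ((↑) : ℤ → ℚ)).mulVec (fun e => (v e : ℚ)) i = ((A.mulVec v i : ℤ) : ℚ) := by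
  simp [Matrix.mulVec, dotProduct]

noncomputable def qsupp {m : ℕ} (y : Fin m → ℚ) : Finset (Fin m) :=
  Finset.univ.filter (fun e => y e ≠ 0)

lemma mem_qsupp {m : ℕ} {y : Fin m → ℚ} {e : Fin m} : e ∈ qsupp y ↔ y e ≠ 0 := by
  simp [qsupp]

lemma exists_conformal_circuit {r m : ℕ} {A : Matrix (Fin r) (Fin m) ℤ}
    (hTU : A.IsTotallyUnimodular) (D : Fin m → ℤ) (hDs : SignVec D) (hD0 : D ≠ 0)
    (hDk : A.mulVec D = 0) :
    ∃ C : Fin m → ℤ, IsCircuit A C ∧ ∀ e, C e ≠ 0 → C e = D e := by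
  classical
  set AQ := A.map ((↑) : ℤ → ℚ) with hAQdef
  -- the set of conformal kernel vectors
  set Good : (Fin m → ℚ) → Prop := fun y =>
    AQ.mulVec y = 0 ∧ y ≠ 0 ∧ (∀ e, 0 ≤ y e * (D e : ℚ)) ∧ ∀ e, D e = 0 → y e = 0
    with hGood
  have hDQ : Good (fun e => (D e : ℚ)) := by
    refine ⟨?_, ?_, ?_, ?_⟩
    · funext i
      rw [mulVec_cast]
      simp [hDk]
    · intro h
      apply hD0
      funext e
      have := congrFun h e
      simpa using this
    · intro e
      rw [← Int.cast_mul]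
      have : (0:ℤ) ≤ D e * D e := mul_self_nonneg _
      exact_mod_cast this
    · intro e he
      simp [he]
  -- choose Good y with minimal support
  have hex : ∃ n, ∃ y, Good y ∧ (qsupp y).card = n := ⟨_, _, hDQ, rfl⟩
  obtain ⟨y, hyG, hycard⟩ := Nat.find_spec hex
  have hmincard : ∀ y' : Fin m → ℚ, Good y' → (qsupp y).card ≤ (qsupp y').card := by
    intro y' hy'
    rw [hycard]
    exact Nat.find_le ⟨y', hy', rfl⟩
  clear hycard
  have hyk : AQ.mulVec y = 0 := hyG.1
  have hy0 : y ≠ 0 := hyG.2.1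
  have hyc : ∀ e, 0 ≤ y e * (D e : ℚ) := hyG.2.2.1
  have hyD : ∀ e, D e = 0 → y e = 0 := hyG.2.2.2
  -- the support of y is minimal among supports of nonzero kernel vectors
  have hmin : ∀ z : Fin m → ℚ, z ≠ 0 → AQ.mulVec z = 0 → qsupp z ⊆ qsupp y →
      qsupp z = qsupp y := by
    intro z hz0 hzk hsub
    by_contra hne
    obtain ⟨f, hfy, hfz⟩ := Finset.exists_of_ssubset (lt_of_le_of_ne hsub hne)
    have hzne : (qsupp z).Nonempty := by
      obtain ⟨e, he⟩ := Function.ne_iff.mp hz0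
      exact ⟨e, mem_qsupp.mpr he⟩
    obtain ⟨a, hamem, hamin⟩ :=
      Finset.exists_min_image (qsupp z) (fun e => |y e| / |z e|) hzne
    have haz : z a ≠ 0 := mem_qsupp.mp hamem
    set t : ℚ := y a / z a with ht
    set y' : Fin m → ℚ := fun e => y e - t * z e with hy'
    have habs : ∀ e, z e ≠ 0 → |t * z e| ≤ |y e| := by
      intro e he
      have h1 : |y a| / |z a| ≤ |y e| / |z e| := hamin e (mem_qsupp.mpr he)
      have h2 : (0:ℚ) < |z e| := abs_pos.mpr he
      have h3 : |t| = |y a| / |z a| := by rw [ht, abs_div]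
      calc |t * z e| = |t| * |z e| := abs_mul _ _
        _ ≤ (|y e| / |z e|) * |z e| := by
            rw [h3]; exact mul_le_mul_of_nonneg_right h1 (le_of_lt h2)
        _ = |y e| := div_mul_cancel₀ _ (ne_of_gt h2)
    have hsubsupp : ∀ e, y e = 0 → y' e = 0 := by
      intro e he
      have hze : z e = 0 := by
        by_contra h
        exact (mem_qsupp.mp (hsub (mem_qsupp.mpr h))) he
      simp [hy', he, hze]
    have hy'a : y' a = 0 := by
      simp only [hy', ht]
      field_simp
      ring
    have hy'f : y' f ≠ 0 := by
      have hzf : z f = 0 := by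
        by_contra h; exact hfz (mem_qsupp.mpr h)
      have hyf : y f ≠ 0 := mem_qsupp.mp hfy
      simpa [hy', hzf] using hyf
    have hGood' : Good y' := by
      refine ⟨?_, ?_, ?_, ?_⟩
      · funext i
        have h1 := congrFun hyk i
        have h2 := congrFun hzk i
        simp only [Matrix.mulVec, dotProduct, Pi.zero_apply] at h1 h2 ⊢
        simp only [hy', mul_sub, Finset.sum_sub_distrib]
        rw [h1]
        have : ∑ e, AQ i e * (t * z e) = t * ∑ e, AQ i e * z e := by
          rw [Finset.mul_sum]; congr 1; funext e; ring
        rw [this, h2, mul_zero, sub_zero]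
      · intro h
        exact hy'f (congrFun h f)
      · intro e
        by_cases hze : z e = 0
        · simpa [hy', hze] using hyc e
        by_cases hye : y e = 0
        · have : y' e = 0 := hsubsupp e hye
          simp [this]
        have hDe : (D e : ℚ) ≠ 0 := by
          intro h
          exact hye (hyD e (by exact_mod_cast h))
        have habs' := habs e hze
        have h1 := hyc e
        have hy'e : y' e = y e - t * z e := rfl
        rcases hDs e with h | h | h
        · rw [h]
          push_cast [h] at h1 ⊢
          have hyneg : y e ≤ 0 := by nlinarith
          have := abs_le.mp habs'
          rw [abs_of_nonpos hyneg] at this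
          nlinarith [this.1, this.2, hy'e]
        · exact absurd (by exact_mod_cast h) hDe
        · rw [h]
          push_cast [h] at h1 ⊢
          have hypos : 0 ≤ y e := by nlinarith
          have := abs_le.mp habs'
          rw [abs_of_nonneg hypos] at this
          nlinarith [this.1, this.2, hy'e]
      · intro e he
        exact hsubsupp e (hyD e he)
    have hcard' : (qsupp y').card < (qsupp y).card := by
      have hss : qsupp y' ⊆ (qsupp y).erase a := by
        intro e he
        rw [Finset.mem_erase]
        constructor
        · rintro rfl; exact (mem_qsupp.mp he) hy'a
        · by_contra h
          have : y e = 0 := by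
            by_contra h2; exact h (mem_qsupp.mpr h2)
          exact (mem_qsupp.mp he) (hsubsupp e this)
      calc (qsupp y').card ≤ ((qsupp y).erase a).card := Finset.card_le_card hss
        _ < (qsupp y).card := Finset.card_erase_lt_of_mem (hsub hamem)
    exact absurd (hmincard y' hGood') (not_le.mpr hcard')
  -- proportionality: kernel vectors supported in supp y vanishing somewhere on supp y are 0
  have hprop : ∀ u : Fin m → ℚ, AQ.mulVec u = 0 → qsupp u ⊆ qsupp y →
      ∀ e0, e0 ∈ qsupp y → u e0 = 0 → u = 0 := by
    intro u hk hsubu e0 he0 hu0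
    by_contra h
    have hq := hmin u h hk hsubu
    exact mem_qsupp.mp (hq.symm ▸ he0) hu0
  set S := qsupp y with hS
  have hSsub : ∀ e, e ∈ S → D e ≠ 0 := by
    intro e he hDe
    exact mem_qsupp.mp he (hyD e hDe)
  have hSne : S.Nonempty := by
    obtain ⟨e, he⟩ := Function.ne_iff.mp hy0
    exact ⟨e, mem_qsupp.mpr he⟩
  obtain ⟨tn, htn⟩ : ∃ tn, S.card = tn + 1 := by
    have := Finset.card_pos.mpr hSne
    exact ⟨S.card - 1, by omega⟩
  set iso := S.orderIsoOfFin htn with hiso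
  set col : Fin (tn+1) → Fin m := fun j => ((iso j : S) : Fin m) with hcol
  have hcolmem : ∀ j, col j ∈ S := fun j => (iso j).2
  have hcolinv : ∀ (e : Fin m) (he : e ∈ S), col (iso.symm ⟨e, he⟩) = e := by
    intro e he
    show ((iso (iso.symm ⟨e, he⟩) : S) : Fin m) = e
    rw [OrderIso.apply_symm_apply]
  set ext : (Fin (tn+1) → ℚ) → (Fin m → ℚ) :=
    fun x e => if he : e ∈ S then x (iso.symm ⟨e, he⟩) else 0 with hext
  have hext_col : ∀ x j, ext x (col j) = x j := by
    intro x j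
    have h : col j ∈ S := hcolmem j
    simp only [hext, dif_pos h]
    congr 1
    have : (⟨col j, h⟩ : S) = iso j := Subtype.ext rfl
    rw [this, OrderIso.symm_apply_apply]
  have hext_supp : ∀ x e, ext x e ≠ 0 → e ∈ S := by
    intro x e he
    by_contra h
    exact he (by simp [hext, h])
  have hsumS : ∀ g : Fin m → ℚ, ∑ e ∈ S, g e = ∑ j, g (col j) := by
    intro g
    rw [← Finset.sum_coe_sort S g]
    exact (Fintype.sum_equiv iso.toEquiv (fun j => g (col j)) (fun x => g (x : Fin m))
      (fun j => rfl)).symm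
  have hmulext : ∀ (x : Fin (tn+1) → ℚ) (i : Fin r),
      AQ.mulVec (ext x) i = ∑ j, AQ i (col j) * x j := by
    intro x i
    simp only [Matrix.mulVec, dotProduct]
    rw [← Finset.sum_subset (Finset.subset_univ S) (fun e _ he => by
      have : ext x e = 0 := by
        by_contra hc; exact he (hext_supp x e hc)
      simp [this])]
    rw [hsumS (fun e => AQ i e * ext x e)]
    exact Finset.sum_congr rfl (fun j _ => by rw [hext_col])
  set yv : Fin (tn+1) → ℚ := fun j => y (col j) with hyv
  have hyv0 : ∀ j, yv j ≠ 0 := by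
    intro j
    have h := hcolmem j
    rw [hS, mem_qsupp] at h
    exact h
  set B : Matrix (Fin r) (Fin (tn+1)) ℚ := Matrix.of (fun i j => AQ i (col j)) with hB
  have hBmul : ∀ (x : Fin (tn+1) → ℚ) (i : Fin r), B.mulVec x i = AQ.mulVec (ext x) i := by
    intro x i
    rw [hmulext]
    rfl
  have hexty : ext yv = y := by
    funext e
    by_cases he : e ∈ S
    · simp only [hext, dif_pos he, hyv]
      rw [hcolinv e he]
    · simp only [hext, dif_neg he]
      by_contra h
      exact he (mem_qsupp.mpr (fun h2 => h h2.symm))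
  have hByv : B.mulVec yv = 0 := by
    funext i
    rw [hBmul, hexty]
    exact congrFun hyk i
  have hkerB : ∀ x : Fin (tn+1) → ℚ, B.mulVec x = 0 → ∃ c : ℚ, x = c • yv := by
    intro x hx
    set u := ext x with hu
    have huk : AQ.mulVec u = 0 := by
      funext i
      rw [← hBmul]
      exact congrFun hx i
    set e0 := col 0 with he0
    set cc := u e0 / y e0 with hcc
    have hy00 : y e0 ≠ 0 := mem_qsupp.mp (hcolmem 0)
    have hv0 : u - cc • y = 0 := by
      apply hprop
      · rw [Matrix.mulVec_sub, huk, Matrix.mulVec_smul, hyk]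
        simp
      · intro e he
        rw [mem_qsupp] at he
        by_contra h
        apply he
        have hue : u e = 0 := by
          by_contra h2
          exact h (hext_supp x e h2)
        have hye : y e = 0 := by
          by_contra h2
          exact h (by rw [hS, mem_qsupp]; exact h2)
        simp [hue, hye]
      · exact hcolmem 0
      · simp only [Pi.sub_apply, Pi.smul_apply, smul_eq_mul, hcc]
        field_simp
        rw [← he0]; ring
    refine ⟨cc, ?_⟩
    funext j
    have := congrFun hv0 (col j)
    simp only [Pi.sub_apply, Pi.smul_apply, smul_eq_mul, Pi.zero_apply, sub_eq_zero] at this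
    rw [← hext_col x j]
    exact this
  -- rank of B is tn
  have hrankB : B.rank = tn := by
    have h1 := LinearMap.finrank_range_add_finrank_ker B.mulVecLin
    have hker : LinearMap.ker B.mulVecLin = Submodule.span ℚ {yv} := by
      apply le_antisymm
      · intro x hx
        rw [LinearMap.mem_ker, Matrix.mulVecLin_apply] at hx
        obtain ⟨c, hc⟩ := hkerB x hx
        rw [Submodule.mem_span_singleton]
        exact ⟨c, hc.symm⟩
      · rw [Submodule.span_le, Set.singleton_subset_iff, SetLike.mem_coe,
          LinearMap.mem_ker, Matrix.mulVecLin_apply]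
        exact hByv
    rw [hker, finrank_span_singleton (fun h => hyv0 0 (congrFun h 0))] at h1
    have h2 : Module.finrank ℚ (Fin (tn+1) → ℚ) = tn + 1 := by
      simp [Module.finrank_pi]
    rw [h2] at h1
    have : B.rank = Module.finrank ℚ (LinearMap.range B.mulVecLin) := rfl
    omega
  have hrowrank : Module.finrank ℚ (Submodule.span ℚ (Set.range B)) = tn := by
    have := Matrix.rank_eq_finrank_span_row B
    rw [hrankB] at this
    exact this.symm
  -- choose a basis of the row space from among the rows
  obtain ⟨bset, hbsub, hbspan, hbind⟩ := exists_linearIndependent ℚ (Set.range B)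
  haveI : Fintype bset := ((Set.finite_range B).subset hbsub).fintype
  have hbcard : Fintype.card bset = tn := by
    have h1 := finrank_span_set_eq_card hbind
    rw [hbspan, hrowrank] at h1
    rw [← Set.toFinset_card]
    exact h1.symm
  have hchoice : ∀ v : bset, ∃ i, B i = (v : Fin (tn+1) → ℚ) := fun v => hbsub v.2
  choose rIdx hrIdx using hchoice
  set eb : Fin tn ≃ bset := (Fintype.equivFinOfCardEq hbcard).symm with heb
  set M : Matrix (Fin tn) (Fin (tn+1)) ℚ := Matrix.of (fun k j => B (rIdx (eb k)) j) with hM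
  have hMrow : ∀ k, (fun j => M k j) = ((eb k : bset) : Fin (tn+1) → ℚ) := by
    intro k
    funext j
    exact congrFun (hrIdx (eb k)) j
  have hMB : ∀ x : Fin (tn+1) → ℚ, M.mulVec x = 0 → B.mulVec x = 0 := by
    intro x hx
    set φ : (Fin (tn+1) → ℚ) →ₗ[ℚ] ℚ :=
      { toFun := fun v => v ⬝ᵥ x
        map_add' := fun u v => add_dotProduct u v x
        map_smul' := fun c v => smul_dotProduct c v x } with hφ
    have hsp : Submodule.span ℚ bset ≤ LinearMap.ker φ := by
      rw [Submodule.span_le]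
      intro v hvb
      rw [SetLike.mem_coe, LinearMap.mem_ker]
      set k := eb.symm ⟨v, hvb⟩ with hk
      have h1 : ((eb k : bset) : Fin (tn+1) → ℚ) = v := by
        rw [hk, Equiv.apply_symm_apply]
      have h2 : (fun j => M k j) = v := (hMrow k).trans h1
      show v ⬝ᵥ x = 0
      rw [← h2]
      exact congrFun hx k
    funext i
    have hBi : B i ∈ Submodule.span ℚ bset := by
      rw [hbspan]
      exact Submodule.subset_span (Set.mem_range_self i)
    exact hsp hBi
  -- every maximal minor of M is nonzero
  have hdet : ∀ j0 : Fin (tn+1), (M.submatrix id j0.succAbove).det ≠ 0 := by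
    intro j0 hdet0
    obtain ⟨v, hv0, hvk⟩ := Matrix.exists_mulVec_eq_zero_iff.mpr hdet0
    set vh : Fin (tn+1) → ℚ := j0.insertNth 0 v with hvh
    have hMvh : M.mulVec vh = 0 := by
      funext k
      show (fun j => M k j) ⬝ᵥ vh = 0
      rw [dotProduct]
      rw [Fin.sum_univ_succAbove (fun j => M k j * vh j) j0]
      simp only [hvh, Fin.insertNth_apply_same, mul_zero, zero_add,
        Fin.insertNth_apply_succAbove]
      exact congrFun hvk k
    have hBvh := hMB vh hMvh
    have huk : AQ.mulVec (ext vh) = 0 := by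
      funext i
      rw [← hBmul]
      exact congrFun hBvh i
    have hzero : ext vh = 0 := by
      apply hprop (ext vh) huk
      · intro e he
        rw [mem_qsupp] at he
        have := hext_supp vh e he
        rwa [hS] at this
      · exact hcolmem j0
      · rw [hext_col]
        simp [hvh]
    apply hv0
    funext l
    have h1 := congrFun hzero (col (j0.succAbove l))
    rw [hext_col] at h1
    simpa [hvh] using h1
  -- the cofactor vector
  set N : Matrix (Fin (tn+1)) (Fin (tn+1)) ℚ :=
    Matrix.of (fun i j => if h : i = 0 then (0:ℚ) else M (i.pred h) j) with hN
  set cvec : Fin (tn+1) → ℚ := Matrix.cramer N (Pi.single (0 : Fin (tn+1)) (1:ℚ)) with hcvec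
  have hNc : N.mulVec cvec = N.det • (Pi.single (0 : Fin (tn+1)) (1:ℚ) : Fin (tn+1) → ℚ) :=
    Matrix.mulVec_cramer N _
  have hNrow : ∀ k j, N (Fin.succ k) j = M k j := by
    intro k j
    show (if h : Fin.succ k = 0 then (0:ℚ) else M ((Fin.succ k).pred h) j) = M k j
    rw [dif_neg (Fin.succ_ne_zero k)]
    simp
  have hMc : M.mulVec cvec = 0 := by
    funext k
    have h := congrFun hNc (Fin.succ k)
    simp only [Pi.smul_apply, smul_eq_mul, Pi.single_eq_of_ne (Fin.succ_ne_zero k),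
      mul_zero] at h
    show ∑ j, M k j * cvec j = 0
    rw [← h]
    show (∑ j, N (Fin.succ k) j * cvec j) = ∑ j, M k j * cvec j
    exact Finset.sum_congr rfl fun j _ => by rw [hNrow]
  have hcval : ∀ j, cvec j = (-1)^(j:ℕ) * (M.submatrix id j.succAbove).det := by
    intro j
    rw [hcvec, Matrix.cramer_apply, Matrix.det_succ_column _ j]
    rw [Finset.sum_eq_single (0 : Fin (tn+1))]
    · rw [Matrix.updateCol_self]
      have hsub : (N.updateCol j (Pi.single 0 1)).submatrix
          (Fin.succAbove 0) j.succAbove = M.submatrix id j.succAbove := by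
        ext k l
        rw [Matrix.submatrix_apply, Matrix.updateCol_ne (Fin.succAbove_ne j l),
          Fin.zero_succAbove, hNrow]
        rfl
      rw [hsub]
      simp
    · intro i _ hi
      rw [Matrix.updateCol_self, Pi.single_eq_of_ne hi, mul_zero, zero_mul]
    · intro h
      exact absurd (Finset.mem_univ 0) h
  have hcunit : ∀ j, cvec j = 1 ∨ cvec j = -1 := by
    intro j
    have hd := hdet j
    have hsubAQ : M.submatrix id j.succAbove
        = AQ.submatrix (fun k => rIdx (eb k)) (fun l => col (j.succAbove l)) := by
      ext k l
      simp [hM, hB]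
    obtain ⟨s, hs⟩ := (Matrix.isTotallyUnimodular_iff AQ).mp (tu_cast hTU) tn
      (fun k => rIdx (eb k)) (fun l => col (j.succAbove l))
    rw [← hsubAQ] at hs
    rw [hcval j]
    cases s with
    | zero =>
        exfalso
        apply hd
        rw [← hs]
        simp
    | pos =>
        rw [← hs]
        rcases neg_one_pow_eq_or ℚ (j:ℕ) with h | h <;> rw [h] <;> simp
    | neg =>
        rw [← hs]
        rcases neg_one_pow_eq_or ℚ (j:ℕ) with h | h <;> rw [h] <;> simp
  -- extension of the cofactor vector
  set chat := ext cvec with hchat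
  have hchatk : AQ.mulVec chat = 0 := by
    funext i
    rw [hchat, ← hBmul]
    exact congrFun (hMB cvec hMc) i
  have hchatpm : ∀ e, e ∈ S → (chat e = 1 ∨ chat e = -1) := by
    intro e he
    have : chat e = cvec (iso.symm ⟨e, he⟩) := by
      simp only [hchat, hext, dif_pos he]
    rw [this]
    exact hcunit _
  have hchat0 : ∀ e, e ∉ S → chat e = 0 := by
    intro e he
    by_contra h
    exact he (hext_supp cvec e h)
  -- chat is proportional to y
  set lam := chat (col 0) / y (col 0) with hlam
  have hy00 : y (col 0) ≠ 0 := by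
    have h := hcolmem 0
    rwa [hS, mem_qsupp] at h
  have hchat00 : chat (col 0) ≠ 0 := by
    rcases hchatpm (col 0) (hcolmem 0) with h | h <;> rw [h] <;> norm_num
  have hprop0 : chat - lam • y = 0 := by
    apply hprop
    · rw [Matrix.mulVec_sub, hchatk, Matrix.mulVec_smul, hyk]
      simp
    · intro e he
      rw [mem_qsupp] at he
      by_contra h
      apply he
      have h1 : chat e = 0 := hchat0 e (fun h2 => h (hS ▸ h2))
      have h2 : y e = 0 := by
        by_contra h3
        exact h (by rw [hS, mem_qsupp]; exact h3)
      simp [h1, h2]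
    · exact hcolmem 0
    · simp only [Pi.sub_apply, Pi.smul_apply, smul_eq_mul, hlam]
      field_simp
      ring
  have hchaty : ∀ e, chat e = lam * y e := by
    intro e
    have h := congrFun hprop0 e
    simp only [Pi.sub_apply, Pi.smul_apply, smul_eq_mul, Pi.zero_apply, sub_eq_zero] at h
    exact h
  have hlam0 : lam ≠ 0 := by
    intro h
    apply hchat00
    rw [hchaty (col 0), h, zero_mul]
  set eps : ℚ := if 0 < lam then 1 else -1 with heps
  have hepspm : eps = 1 ∨ eps = -1 := by
    rw [heps]; split <;> simp
  have hepslam : 0 < eps * lam := by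
    rw [heps]
    rcases lt_trichotomy lam 0 with h | h | h
    · rw [if_neg (by linarith)]; linarith
    · exact absurd h hlam0
    · rw [if_pos h]; linarith
  set C : Fin m → ℤ := fun e => if e ∈ S then D e else 0 with hCdef
  have hDpm : ∀ e, e ∈ S → ((D e : ℚ) = 1 ∨ (D e : ℚ) = -1) := by
    intro e he
    rcases hDs e with h | h | h
    · right; exact_mod_cast h
    · exact absurd h (hSsub e he)
    · left; exact_mod_cast h
  have hcast : ∀ e, (C e : ℚ) = eps * chat e := by
    intro e
    by_cases he : e ∈ S
    · have hCe : C e = D e := by rw [hCdef]; simp [he]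
      rw [hCe]
      have hyDe : 0 < y e * (D e : ℚ) := by
        rcases lt_or_eq_of_le (hyc e) with h | h
        · exact h
        · exfalso
          have hye : y e ≠ 0 := by
            have := he; rw [hS, mem_qsupp] at this; exact this
          have hDe : (D e : ℚ) ≠ 0 := by
            have := hSsub e he
            exact_mod_cast this
          exact (mul_ne_zero hye hDe) h.symm
      have hpos : 0 < (eps * chat e) * (D e : ℚ) := by
        have : (eps * chat e) * (D e : ℚ) = (eps * lam) * (y e * (D e : ℚ)) := by
          rw [hchaty e]; ring
        rw [this]
        exact mul_pos hepslam hyDe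
      have hepc : eps * chat e = 1 ∨ eps * chat e = -1 := by
        rcases hepspm with h1 | h1 <;> rcases hchatpm e he with h2 | h2 <;>
          rw [h1, h2] <;> norm_num
      rcases hepc with h1 | h1 <;> rcases hDpm e he with h2 | h2 <;>
        rw [h1, h2] <;> rw [h1, h2] at hpos <;> norm_num at hpos
    · have hCe : C e = 0 := by rw [hCdef]; simp [he]
      rw [hCe, hchat0 e he, mul_zero, Int.cast_zero]
  have hCsupp : ∀ e, C e ≠ 0 ↔ e ∈ S := by
    intro e
    constructor
    · intro h
      by_contra h2
      apply h
      rw [hCdef]; simp [h2]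
    · intro h
      rw [hCdef]; simp only [if_pos h]
      exact hSsub e h
  refine ⟨C, ⟨?_, ?_, ?_, ?_⟩, ?_⟩
  · intro e
    by_cases he : e ∈ S
    · have hCe : C e = D e := by rw [hCdef]; simp [he]
      rw [hCe]; exact hDs e
    · have hCe : C e = 0 := by rw [hCdef]; simp [he]
      rw [hCe]; right; left; rfl
  · intro h
    have h0 := (hCsupp (col 0)).mpr (hcolmem 0)
    rw [h] at h0
    exact h0 rfl
  · funext i
    have h1 : AQ.mulVec (fun e => ((C e : ℤ) : ℚ)) i = 0 := by
      have heq : (fun e => ((C e : ℤ) : ℚ)) = eps • chat := by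
        funext e
        rw [hcast e]
        rfl
      rw [heq, Matrix.mulVec_smul, hchatk]
      simp
    rw [mulVec_cast] at h1
    have h2 : A.mulVec C i = 0 := by exact_mod_cast h1
    exact h2
  · intro v hv0 hvk hsubv
    set vq : Fin m → ℚ := fun e => (v e : ℚ) with hvq
    have hcastv : ∀ e, v e ≠ 0 ↔ vq e ≠ 0 := by
      intro e
      constructor
      · intro h h2
        apply h
        have h3 : ((v e : ℤ) : ℚ) = 0 := h2
        exact_mod_cast h3
      · intro h h2
        apply h
        show ((v e : ℤ) : ℚ) = 0
        rw [h2]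
        exact Int.cast_zero
    have hvq0 : vq ≠ 0 := by
      obtain ⟨e, he⟩ := Function.ne_iff.mp hv0
      intro h
      exact (hcastv e).mp he (congrFun h e)
    have hvqk : AQ.mulVec vq = 0 := by
      funext i
      rw [hvq, mulVec_cast, hvk]
      simp
    have hvqsub : qsupp vq ⊆ S := by
      intro e he
      have hve : v e ≠ 0 := (hcastv e).mpr (mem_qsupp.mp he)
      exact (hCsupp e).mp (hsubv (Set.mem_setOf.mpr hve))
    have hqeq := hmin vq hvq0 hvqk hvqsub
    ext e
    simp only [Set.mem_setOf]
    constructor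
    · intro h
      have h1 : e ∈ qsupp vq := mem_qsupp.mpr ((hcastv e).mp h)
      rw [hqeq] at h1
      exact (hCsupp e).mpr h1
    · intro h
      have h1 : e ∈ S := (hCsupp e).mp h
      rw [← hqeq] at h1
      exact (hcastv e).mpr (mem_qsupp.mp h1)
  · intro e he
    have heS := (hCsupp e).mp he
    rw [hCdef]
    simp [heS]






lemma IsCircuit.neg' {r m : ℕ} {A : Matrix (Fin r) (Fin m) ℤ} {C : Fin m → ℤ}
    (h : IsCircuit A C) : IsCircuit A (-C) := by
  obtain ⟨hs, h0, hk, hmin⟩ := h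
  refine ⟨?_, ?_, ?_, ?_⟩
  · intro e
    rcases hs e with h | h | h
    · right; right; simp [h]
    · right; left; simp [h]
    · left; simp [h]
  · intro h
    apply h0
    funext e
    have := congrFun h e
    simpa using this
  · rw [Matrix.mulVec_neg, hk]
    simp
  · intro v hv0 hvk hsub
    have hsupp : {e | (-C) e ≠ 0} = {e | C e ≠ 0} := by
      ext e; simp
    rw [hsupp] at hsub ⊢
    exact hmin v hv0 hvk hsub

lemma reversal_step {r m : ℕ} {A : Matrix (Fin r) (Fin m) ℤ} {O O' : Fin m → ℤ}
    (h : CircuitReversal A O O') :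
    ∃ K : Fin m → ℤ, A.mulVec K = 0 ∧ ∀ e, O' e = O e + 2 * K e := by
  obtain ⟨C, hC, hcomp, hflip, hfix⟩ := h
  refine ⟨-C, by rw [Matrix.mulVec_neg, hC.2.2.1]; simp, ?_⟩
  intro e
  by_cases hc : C e = 0
  · rw [hfix e hc]
    simp [hc]
  · rw [hflip e hc, hcomp e hc]
    simp only [Pi.neg_apply]
    ring

lemma circEquiv_diff {r m : ℕ} {A : Matrix (Fin r) (Fin m) ℤ} {O1 O2 : Fin m → ℤ}
    (h : CircEquiv A O1 O2) :
    ∃ K : Fin m → ℤ, A.mulVec K = 0 ∧ ∀ e, O2 e = O1 e + 2 * K e := by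
  induction h with
  | rel x y hxy => exact reversal_step hxy
  | refl x => exact ⟨0, by simp [Matrix.mulVec_zero], by intro e; simp⟩
  | symm x y hxy ih =>
      obtain ⟨K, hk, he⟩ := ih
      refine ⟨-K, by rw [Matrix.mulVec_neg, hk]; simp, ?_⟩
      intro e
      have h1 := he e
      simp only [Pi.neg_apply]
      omega
  | trans x y z hxy hyz ih1 ih2 =>
      obtain ⟨K1, hk1, he1⟩ := ih1
      obtain ⟨K2, hk2, he2⟩ := ih2
      refine ⟨K1 + K2, by rw [Matrix.mulVec_add, hk1, hk2]; simp, ?_⟩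
      intro e
      have h1 := he1 e
      have h2 := he2 e
      simp only [Pi.add_apply]
      omega

lemma unique_sigma {r m : ℕ} {A : Matrix (Fin r) (Fin m) ℤ} (hTU : A.IsTotallyUnimodular)
    {w : Fin m → ℝ} {O1 O2 : Fin m → ℤ}
    (h1 : IsOrientation O1) (h2 : IsOrientation O2)
    (hs1 : SigmaCompatible A w O1) (hs2 : SigmaCompatible A w O2)
    (heq : CircEquiv A O1 O2) : O1 = O2 := by
  by_contra hne
  obtain ⟨K, hKk, hKe⟩ := circEquiv_diff heq
  have hK0 : K ≠ 0 := by
    intro h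
    apply hne
    funext e
    have h3 := hKe e
    rw [h] at h3
    simpa using h3.symm
  have hKs : SignVec K := by
    intro e
    have h3 := hKe e
    rcases h1 e with ha | ha <;> rcases h2 e with hb | hb <;> rw [ha, hb] at h3 <;> omega
  obtain ⟨C, hC, hconf⟩ := exists_conformal_circuit hTU K hKs hK0 hKk
  have hcomp2 : ∀ e, C e ≠ 0 → O2 e = C e := by
    intro e he
    have hce := hconf e he
    have h3 := hKe e
    rcases h1 e with ha | ha <;> rcases h2 e with hb | hb <;> omega
  have hcomp1 : ∀ e, (-C) e ≠ 0 → O1 e = (-C) e := by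
    intro e he
    simp only [Pi.neg_apply] at he ⊢
    have he' : C e ≠ 0 := fun h => he (by rw [h]; ring)
    have hce := hconf e he'
    have h3 := hKe e
    rcases h1 e with ha | ha <;> rcases h2 e with hb | hb <;> omega
  have hp2 := hs2 C hC hcomp2
  have hp1 := hs1 (-C) hC.neg' hcomp1
  have hsum : ∑ e, w e * (((-C) e : ℤ) : ℝ) = -∑ e, w e * ((C e : ℤ) : ℝ) := by
    rw [← Finset.sum_neg_distrib]
    refine Finset.sum_congr rfl fun e _ => ?_
    simp only [Pi.neg_apply]
    push_cast
    ring
  rw [hsum] at hp1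
  linarith

def toO {m : ℕ} (b : Fin m → Bool) : Fin m → ℤ := fun e => if b e then 1 else -1

noncomputable def mu {m : ℕ} (w : Fin m → ℝ) (O : Fin m → ℤ) : ℕ :=
  (@Finset.filter (Fin m → Bool)
    (fun b => (∑ e, w e * (O e : ℝ)) < ∑ e, w e * ((toO b e : ℤ) : ℝ))
    (Classical.decPred _) Finset.univ).card

lemma mu_lt {m : ℕ} (w : Fin m → ℝ) {O O' : Fin m → ℤ} (hO' : IsOrientation O')
    (hlt : (∑ e, w e * (O e : ℝ)) < ∑ e, w e * (O' e : ℝ)) : mu w O' < mu w O := by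
  classical
  apply Finset.card_lt_card
  have hsub : (@Finset.filter (Fin m → Bool)
      (fun b => (∑ e, w e * (O' e : ℝ)) < ∑ e, w e * ((toO b e : ℤ) : ℝ))
      (Classical.decPred _) Finset.univ) ⊆ (@Finset.filter (Fin m → Bool)
      (fun b => (∑ e, w e * (O e : ℝ)) < ∑ e, w e * ((toO b e : ℤ) : ℝ))
      (Classical.decPred _) Finset.univ) := by
    intro b hb
    rw [Finset.mem_filter] at hb ⊢
    exact ⟨hb.1, lt_trans hlt hb.2⟩
  rw [Finset.ssubset_iff_of_subset hsub]
  set b' : Fin m → Bool := fun e => decide (O' e = 1) with hb'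
  have htoO : ∀ e, (toO b' e : ℤ) = O' e := by
    intro e
    rcases hO' e with h | h <;> simp [toO, hb', h]
  have hsums : ∑ e, w e * ((toO b' e : ℤ) : ℝ) = ∑ e, w e * (O' e : ℝ) := by
    refine Finset.sum_congr rfl fun e _ => by rw [htoO e]
  refine ⟨b', ?_, ?_⟩
  · rw [Finset.mem_filter]
    exact ⟨Finset.mem_univ _, by rw [hsums]; exact hlt⟩
  · rw [Finset.mem_filter]
    rintro ⟨-, h⟩
    rw [hsums] at h
    exact lt_irrefl _ h

lemma sigma_step {r m : ℕ} (A : Matrix (Fin r) (Fin m) ℤ) (w : Fin m → ℝ)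
    (hw : ∀ C : Fin m → ℤ, IsCircuit A C → ∑ e, w e * (C e : ℝ) ≠ 0)
    (O : Fin m → ℤ) (hO : IsOrientation O) (hsc : ¬ SigmaCompatible A w O) :
    ∃ O₂, IsOrientation O₂ ∧ CircuitReversal A O O₂ ∧
      (∑ e, w e * (O e : ℝ)) < ∑ e, w e * (O₂ e : ℝ) := by
  unfold SigmaCompatible at hsc
  push_neg at hsc
  obtain ⟨C, hC, hcomp, hpos⟩ := hsc
  have hneg : ∑ e, w e * (C e : ℝ) < 0 := lt_of_le_of_ne hpos (hw C hC)
  set O₂ : Fin m → ℤ := fun e => if C e = 0 then O e else -O e with hO₂def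
  have hO₂ : IsOrientation O₂ := by
    intro e
    rcases hO e with h | h <;> by_cases hc : C e = 0 <;> simp [hO₂def, hc, h]
  have hrev : CircuitReversal A O O₂ :=
    ⟨C, hC, hcomp, fun e he => by simp [hO₂def, he], fun e he => by simp [hO₂def, he]⟩
  refine ⟨O₂, hO₂, hrev, ?_⟩
  have hpt : ∀ e, (O₂ e : ℝ) = (O e : ℝ) - 2 * (C e : ℝ) := by
    intro e
    by_cases hc : C e = 0
    · have h1 : O₂ e = O e := by simp [hO₂def, hc]
      rw [h1, hc]
      push_cast
      ring
    · have h1 : O e = C e := hcomp e hc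
      have h2 : O₂ e = -O e := by simp [hO₂def, hc]
      rw [h2, h1]
      push_cast
      ring
  have hsum : ∑ e, w e * (O₂ e : ℝ) = ∑ e, w e * (O e : ℝ) - 2 * ∑ e, w e * (C e : ℝ) := by
    rw [Finset.mul_sum, ← Finset.sum_sub_distrib]
    exact Finset.sum_congr rfl fun e _ => by rw [hpt e]; ring
  rw [hsum]
  linarith

lemma exists_sigma_aux {r m : ℕ} (A : Matrix (Fin r) (Fin m) ℤ) (w : Fin m → ℝ)
    (hw : ∀ C : Fin m → ℤ, IsCircuit A C → ∑ e, w e * (C e : ℝ) ≠ 0) :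
    ∀ (n : ℕ) (O : Fin m → ℤ), IsOrientation O → mu w O ≤ n →
      ∃ O', IsOrientation O' ∧ SigmaCompatible A w O' ∧ CircEquiv A O O' := by
  intro n
  induction n with
  | zero =>
    intro O hO hmu
    by_cases hsc : SigmaCompatible A w O
    · exact ⟨O, hO, hsc, Relation.EqvGen.refl O⟩
    · exfalso
      obtain ⟨O₂, hO₂, hrev, hlt⟩ := sigma_step A w hw O hO hsc
      have := mu_lt w hO₂ hlt
      omega
  | succ n ih =>
    intro O hO hmu
    by_cases hsc : SigmaCompatible A w O
    · exact ⟨O, hO, hsc, Relation.EqvGen.refl O⟩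
    · obtain ⟨O₂, hO₂, hrev, hlt⟩ := sigma_step A w hw O hO hsc
      have hmu2 : mu w O₂ ≤ n := by
        have := mu_lt w hO₂ hlt
        omega
      obtain ⟨O', h1, h2, h3⟩ := ih O₂ hO₂ hmu2
      exact ⟨O', h1, h2, Relation.EqvGen.trans _ _ _ (Relation.EqvGen.rel _ _ hrev) h3⟩


/-- Every circuit-reversal equivalence class of orientations contains exactly one
σ-compatible orientation. -/
theorem stmt8 {r m : ℕ} (A : Matrix (Fin r) (Fin m) ℤ)
    (hTU : A.IsTotallyUnimodular) (hrank : (A.map ((↑) : ℤ → ℝ)).rank = r)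
    (w : Fin m → ℝ) (hw : ∀ C : Fin m → ℤ, IsCircuit A C → ∑ e, w e * (C e : ℝ) ≠ 0)
    (O : Fin m → ℤ) (hO : IsOrientation O) :
    ∃! O' : Fin m → ℤ, IsOrientation O' ∧ SigmaCompatible A w O' ∧ CircEquiv A O O' := by

  obtain ⟨O', h1, h2, h3⟩ := exists_sigma_aux A w hw (mu w O) O hO le_rfl
  refine ⟨O', ⟨h1, h2, h3⟩, ?_⟩
  rintro O'' ⟨g1, g2, g3⟩
  exact unique_sigma hTU g1 h1 g2 h2
    (Relation.EqvGen.trans _ _ _ (Relation.EqvGen.symm _ _ g3) h3)
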